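/- arXiv:0910.4477 — 2 statements merged into one kernel-verified Lean document; each statement's English description precedes it below -/
import Mathlib

section
/- In the Laurent polynomial ring Z[Y_a^{±1} : a ∈ C*], call a monomial m = Π_a Y_a^{u_a} 'right negative with respect to a base d and parameter q' if m ∈ Z[Y_{dq^r}^{±1} : r ≥ 0] and there exists s with u_{dq^s} < 0 such that u_{dq^r} > 0 implies r < s. Then the product of two right-negative monomials (with the same base d and q not a root of unity) is right negative. In particular, a product of right-negative monomials is never equal to 1. -/
/-- A (Laurent) monomial `m = Π_a Y_a^{u_a}` — encoded additively as its finitely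
supported exponent function — is *right negative* with respect to base `d` and
parameter `q` if it is supported on `{d qʳ : r ∈ ℕ}` and there is an `s` with
`u_{dqˢ} < 0` such that every `r` with `u_{dqʳ} > 0` satisfies `r < s`. -/
def RightNeg (q d : ℂ) (m : ℂ →₀ ℤ) : Prop :=
  (∀ a : ℂ, m a ≠ 0 → ∃ r : ℕ, a = d * q ^ r) ∧
  ∃ s : ℕ, m (d * q ^ s) < 0 ∧ ∀ r : ℕ, 0 < m (d * q ^ r) → r < s

/-- Helper: the case of `RightNeg` addition where the first witness is ≤ the second. -/
lemma rightNeg_add_aux (q d : ℂ) (m₁ m₂ : ℂ →₀ ℤ)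
    (h₁ : RightNeg q d m₁) (h₂ : RightNeg q d m₂)
    (s₁ s₂ : ℕ) (hs₁ : m₁ (d * q ^ s₁) < 0 ∧ ∀ r : ℕ, 0 < m₁ (d * q ^ r) → r < s₁)
    (hs₂ : m₂ (d * q ^ s₂) < 0 ∧ ∀ r : ℕ, 0 < m₂ (d * q ^ r) → r < s₂)
    (hle : s₁ ≤ s₂) : RightNeg q d (m₁ + m₂) := by
  obtain ⟨h1a, _⟩ := h₁
  obtain ⟨h2a, _⟩ := h₂
  constructor
  · intro a ha
    rw [Finsupp.add_apply] at ha
    by_cases h : m₁ a = 0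
    · exact h2a a (by omega)
    · exact h1a a h
  · refine ⟨s₂, ?_, ?_⟩
    · rw [Finsupp.add_apply]
      have : m₁ (d * q ^ s₂) ≤ 0 := by
        by_contra h
        have := hs₁.2 s₂ (by omega)
        omega
      have := hs₂.1
      omega
    · intro r hr
      rw [Finsupp.add_apply] at hr
      rcases lt_or_ge 0 (m₁ (d * q ^ r)) with h | h
      · exact lt_of_lt_of_le (hs₁.2 r h) hle
      · exact hs₂.2 r (by omega)

lemma rightNeg_add (q d : ℂ) (m₁ m₂ : ℂ →₀ ℤ)
    (h₁ : RightNeg q d m₁) (h₂ : RightNeg q d m₂) : RightNeg q d (m₁ + m₂) := by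
  obtain ⟨s₁, hs₁⟩ := h₁.2
  obtain ⟨s₂, hs₂⟩ := h₂.2
  rcases le_total s₁ s₂ with h | h
  · exact rightNeg_add_aux q d m₁ m₂ h₁ h₂ s₁ s₂ hs₁ hs₂ h
  · rw [add_comm]
    exact rightNeg_add_aux q d m₂ m₁ h₂ h₁ s₂ s₁ hs₂ hs₁ h

lemma rightNeg_ne_zero (q d : ℂ) (m : ℂ →₀ ℤ) (h : RightNeg q d m) : m ≠ 0 := by
  obtain ⟨_, s, hs, _⟩ := h
  intro hm
  rw [hm] at hs
  simp at hs

/-- the product (= sum of exponent functions) of two right-negative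
monomials with the same base is right negative; in particular, a (nonempty) product
of right-negative monomials is never the unit monomial `1` (= `0` additively). -/
theorem statement8 (q d : ℂ) (hq : q ≠ 0) (hd : d ≠ 0)
    (hnru : ∀ n : ℕ, 0 < n → q ^ n ≠ 1)
    (m₁ m₂ : ℂ →₀ ℤ) (h₁ : RightNeg q d m₁) (h₂ : RightNeg q d m₂) :
    RightNeg q d (m₁ + m₂) ∧
    ∀ (ms : List (ℂ →₀ ℤ)), ms ≠ [] → (∀ m ∈ ms, RightNeg q d m) → ms.sum ≠ 0 := by
  refine ⟨rightNeg_add q d m₁ m₂ h₁ h₂, ?_⟩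
  have key : ∀ (ms : List (ℂ →₀ ℤ)), ms ≠ [] → (∀ m ∈ ms, RightNeg q d m) →
      RightNeg q d ms.sum := by
    intro ms
    induction ms with
    | nil => intro h; exact absurd rfl h
    | cons a t ih =>
      intro _ hall
      rcases eq_or_ne t [] with rfl | ht
      · simpa using hall a (by simp)
      · have := ih ht (fun m hm => hall m (List.mem_cons_of_mem a hm))
        rw [List.sum_cons]
        exact rightNeg_add q d a t.sum (hall a (by simp)) this
  intro ms hne hall
  exact rightNeg_ne_zero q d ms.sum (key ms hne hall)
end

section
/- Let V be a finite-dimensional simple type-1 U_q(ŝl_2)-module (q not a root of unity), with q-character χ_q(V) a sum of monomials in Z[Y_b^{±1} : b ∈ C*]. Suppose for some a ∈ C* and n > 0, χ_q(V) contains a dominant monomial m such that Y_a^n divides m and Y_{aq^2} does not divide m. Then either (i) χ_q(V) contains the monomials m·A_{aq}^{−p} for all 1 ≤ p ≤ n, where A_b = Y_{bq} Y_{bq^{−1}}; or (ii) there exists k > 0 such that χ_q(V) contains the monomial m·A_{aq^k}. -/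
open scoped BigOperators Classical

/-- The `t`-th monomial of the q-character of the Kirillov–Reshetikhin module `W_a^{(r)}`
of `U_q(ŝl₂)`, encoded additively as a finitely supported exponent function. -/
noncomputable def KRmon (q a : ℂ) (r t : ℕ) : ℂ →₀ ℤ :=
  (∑ l ∈ Finset.Icc 1 (r - t), Finsupp.single (a * q ^ (-(r : ℤ) - 1 + 2 * (l : ℤ))) 1)
    - ∑ l ∈ Finset.Icc 1 t, Finsupp.single (a * q ^ ((r : ℤ) + 3 - 2 * (l : ℤ))) 1

/-- The segment `S_r(a) = {aq^{−r+1}, aq^{−r+3}, …, aq^{r−1}}`. -/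
noncomputable def Seg (q a : ℂ) (r : ℕ) : Finset ℂ :=
  (Finset.range r).image fun l => a * q ^ (-(r : ℤ) + 1 + 2 * (l : ℤ))

/-- Two segments are in *special position* if their union is a segment and neither
contains the other. -/
def SpecialPos (q a₁ : ℂ) (r₁ : ℕ) (a₂ : ℂ) (r₂ : ℕ) : Prop :=
  (∃ (b : ℂ) (m : ℕ), Seg q a₁ r₁ ∪ Seg q a₂ r₂ = Seg q b m) ∧
  ¬ Seg q a₁ r₁ ⊆ Seg q a₂ r₂ ∧ ¬ Seg q a₂ r₂ ⊆ Seg q a₁ r₁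

/-- If `q` is not a root of unity then `q^d = 1` forces `d = 0`. -/
lemma st16.zpow_eq_one (q : ℂ) (hnru : ∀ n : ℕ, 0 < n → q ^ n ≠ 1)
    {d : ℤ} (h : q ^ d = 1) : d = 0 := by
  by_contra hd
  have h1 : q ^ (d.natAbs) = 1 := by
    rcases Int.natAbs_eq d with h' | h'
    · rw [h'] at h; rwa [zpow_natCast] at h
    · rw [h'] at h; rw [zpow_neg, zpow_natCast, inv_eq_one] at h; exact h
  exact hnru d.natAbs (Int.natAbs_pos.mpr hd) h1

/-- Integer powers of a non-root-of-unity are injective. -/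
lemma st16.zpow_inj (q : ℂ) (hq : q ≠ 0) (hnru : ∀ n : ℕ, 0 < n → q ^ n ≠ 1)
    {i j : ℤ} (h : q ^ i = q ^ j) : i = j := by
  have h1 : q ^ (i - j) = 1 := by
    rw [zpow_sub₀ hq, h, div_self (zpow_ne_zero _ hq)]
  have := st16.zpow_eq_one q hnru h1
  omega

/-- Evaluating a sum of distinct singles gives an indicator. -/
lemma st16.sum_single_apply_eq {S : Finset ℕ} {g : ℕ → ℂ}
    (hg : ∀ l ∈ S, ∀ l' ∈ S, g l = g l' → l = l') (c : ℂ) :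
    (∑ l ∈ S, Finsupp.single (g l) (1 : ℤ)) c
      = if ∃ l ∈ S, g l = c then 1 else 0 := by
  rw [Finsupp.finset_sum_apply]
  by_cases h : ∃ l ∈ S, g l = c
  · obtain ⟨l0, hl0, he⟩ := h
    rw [if_pos ⟨l0, hl0, he⟩, Finset.sum_eq_single l0]
    · rw [Finsupp.single_apply, if_pos he]
    · intro b hb hne
      rw [Finsupp.single_apply, if_neg]
      intro hbc
      exact hne (hg b hb l0 hl0 (hbc.trans he.symm))
    · intro h'; exact absurd hl0 h'
  · rw [if_neg h, Finset.sum_eq_zero]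
    intro l hl
    rw [Finsupp.single_apply, if_neg]
    intro hc
    exact h ⟨l, hl, hc⟩

/-- `c` is a site of the positive part of `KRmon q b r t`. -/
def st16.PIn (q b c : ℂ) (r t : ℕ) : Prop :=
  ∃ l ∈ Finset.Icc 1 (r - t), b * q ^ (-(r : ℤ) - 1 + 2 * (l : ℤ)) = c

/-- `c` is a site of the negative part of `KRmon q b r t`. -/
def st16.NIn (q b c : ℂ) (r t : ℕ) : Prop :=
  ∃ l ∈ Finset.Icc 1 t, b * q ^ ((r : ℤ) + 3 - 2 * (l : ℤ)) = c

lemma st16.KRmon_apply (q : ℂ) (hq : q ≠ 0) (hnru : ∀ n : ℕ, 0 < n → q ^ n ≠ 1)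
    (b : ℂ) (hb : b ≠ 0) (r t : ℕ) (c : ℂ) :
    (KRmon q b r t) c = (if st16.PIn q b c r t then 1 else 0)
      - (if st16.NIn q b c r t then 1 else 0) := by
  unfold KRmon st16.PIn st16.NIn
  have inj1 : ∀ l ∈ Finset.Icc 1 (r - t), ∀ l' ∈ Finset.Icc 1 (r - t),
      b * q ^ (-(r : ℤ) - 1 + 2 * (l : ℤ)) = b * q ^ (-(r : ℤ) - 1 + 2 * (l' : ℤ)) → l = l' := by
    intro l _ l' _ he
    have := st16.zpow_inj q hq hnru (mul_left_cancel₀ hb he)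
    omega
  have inj2 : ∀ l ∈ Finset.Icc 1 t, ∀ l' ∈ Finset.Icc 1 t,
      b * q ^ ((r : ℤ) + 3 - 2 * (l : ℤ)) = b * q ^ ((r : ℤ) + 3 - 2 * (l' : ℤ)) → l = l' := by
    intro l _ l' _ he
    have := st16.zpow_inj q hq hnru (mul_left_cancel₀ hb he)
    omega
  rw [Finsupp.sub_apply, st16.sum_single_apply_eq inj1 c, st16.sum_single_apply_eq inj2 c]
  split_ifs <;> rfl

lemma st16.KRmon_succ (q : ℂ) (b : ℂ) (r t : ℕ) (h : t < r) :
    KRmon q b r (t + 1) = KRmon q b r t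
      - Finsupp.single (b * q ^ ((r : ℤ) - 1 - 2 * (t : ℤ))) 1
      - Finsupp.single (b * q ^ ((r : ℤ) + 1 - 2 * (t : ℤ))) 1 := by
  unfold KRmon
  have e1 : ∑ l ∈ Finset.Icc 1 (r - t), Finsupp.single (b * q ^ (-(r : ℤ) - 1 + 2 * (l : ℤ))) (1:ℤ)
      = (∑ l ∈ Finset.Icc 1 (r - (t+1)), Finsupp.single (b * q ^ (-(r : ℤ) - 1 + 2 * (l : ℤ))) 1)
        + Finsupp.single (b * q ^ ((r : ℤ) - 1 - 2 * (t : ℤ))) 1 := by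
    have h2 : r - t = (r - (t+1)) + 1 := by omega
    rw [h2, Finset.sum_Icc_succ_top (by omega : 1 ≤ r - (t+1) + 1)]
    congr 2
    have h3 : (-(r : ℤ) - 1 + 2 * ((r - (t+1) + 1 : ℕ) : ℤ)) = (r : ℤ) - 1 - 2 * (t : ℤ) := by
      omega
    rw [h3]
  have e2 : ∑ l ∈ Finset.Icc 1 (t+1), Finsupp.single (b * q ^ ((r : ℤ) + 3 - 2 * (l : ℤ))) (1:ℤ)
      = (∑ l ∈ Finset.Icc 1 t, Finsupp.single (b * q ^ ((r : ℤ) + 3 - 2 * (l : ℤ))) 1)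
        + Finsupp.single (b * q ^ ((r : ℤ) + 1 - 2 * (t : ℤ))) 1 := by
    rw [Finset.sum_Icc_succ_top (by omega : 1 ≤ t + 1)]
    congr 2
    have h3 : ((r : ℤ) + 3 - 2 * ((t + 1 : ℕ) : ℤ)) = (r : ℤ) + 1 - 2 * (t : ℤ) := by
      omega
    rw [h3]
  rw [eq_sub_of_add_eq e1.symm, eq_sub_of_add_eq e2.symm]
  abel

/-- let `V = ⊗_{t∈T} W_{a_t}^{(r_t)}` be a simple finite-dimensional type-1
`U_q(ŝl₂)`-module (segments pairwise in general position); its q-character consists of the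
monomials `Σ_t KRmon q (a_t) (r_t) (f t)`, `f t ≤ r_t`. If `χ_q(V)` contains a dominant
monomial `m` with `Y_a^n ∣ m` (`n > 0`) and `Y_{aq²} ∤ m`, then either (i) `χ_q(V)`
contains `m A_{aq}^{−p}` for all `1 ≤ p ≤ n`, or (ii) `χ_q(V)` contains `m A_{aq^k}` for
some `k > 0`, where `A_b = Y_{bq} Y_{bq^{−1}}`. -/
theorem statement16 (q : ℂ) (hq : q ≠ 0)
    (hnru : ∀ n : ℕ, 0 < n → q ^ n ≠ 1)
    {T : Type*} [Fintype T] (aa : T → ℂ) (rr : T → ℕ)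
    (haa : ∀ t, aa t ≠ 0) (hrr : ∀ t, 1 ≤ rr t)
    (hgen : ∀ t t' : T, t ≠ t' → ¬ SpecialPos q (aa t) (rr t) (aa t') (rr t'))
    (a : ℂ) (ha : a ≠ 0) (n : ℕ) (hn : 0 < n)
    (m : ℂ →₀ ℤ)
    (hmem : ∃ f : T → ℕ, (∀ t, f t ≤ rr t) ∧ m = ∑ t, KRmon q (aa t) (rr t) (f t))
    (hdom : ∀ b : ℂ, 0 ≤ m b)
    (hfac : (n : ℤ) ≤ m a)
    (hnot : m (a * q ^ 2) = 0) :
    (∀ p : ℕ, 1 ≤ p → p ≤ n →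
      ∃ f : T → ℕ, (∀ t, f t ≤ rr t) ∧
        m - (p : ℤ) • (Finsupp.single (a * q ^ 2) 1 + Finsupp.single a 1)
          = ∑ t, KRmon q (aa t) (rr t) (f t)) ∨
    (∃ k : ℕ, 0 < k ∧ ∃ f : T → ℕ, (∀ t, f t ≤ rr t) ∧
        m + (Finsupp.single (a * q ^ (k + 1)) 1 + Finsupp.single (a * q ^ (k - 1)) 1)
          = ∑ t, KRmon q (aa t) (rr t) (f t)) := by
  classical
  obtain ⟨f, hf, hm⟩ := hmem
  by_cases hcase : ∃ s : T, 0 < f s ∧ ∃ k : ℕ, 0 < k ∧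
      aa s * q ^ ((rr s : ℤ) + 3 - 2 * (f s : ℤ)) = a * q ^ (k + 1)
  · -- Case (ii): some factor has its lowest negative at a·q^{k+1}, k ≥ 1
    obtain ⟨s, hs, k, hk, heq⟩ := hcase
    refine Or.inr ⟨k, hk, fun t => if t = s then f s - 1 else f t, ?_, ?_⟩
    · intro t
      dsimp only
      by_cases h : t = s
      · rw [if_pos h]; exact le_trans (Nat.sub_le _ _) (h ▸ hf t)
      · rw [if_neg h]; exact hf t
    · have hlt : f s - 1 < rr s := by have := hf s; omega
      have hsucc := st16.KRmon_succ q (aa s) (rr s) (f s - 1) hlt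
      have h1 : f s - 1 + 1 = f s := by omega
      rw [h1] at hsucc
      have hc : ((f s - 1 : ℕ) : ℤ) = (f s : ℤ) - 1 := by omega
      have site2 : aa s * q ^ ((rr s : ℤ) + 1 - 2 * ((f s - 1 : ℕ) : ℤ)) = a * q ^ (k + 1) := by
        rw [hc, show (rr s : ℤ) + 1 - 2 * ((f s : ℤ) - 1) = (rr s : ℤ) + 3 - 2 * (f s : ℤ) from by ring]
        exact heq
      have site1 : aa s * q ^ ((rr s : ℤ) - 1 - 2 * ((f s - 1 : ℕ) : ℤ)) = a * q ^ (k - 1) := by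
        rw [hc, show (rr s : ℤ) - 1 - 2 * ((f s : ℤ) - 1)
              = ((rr s : ℤ) + 3 - 2 * (f s : ℤ)) + (-2) from by ring,
          zpow_add₀ hq, ← mul_assoc, heq, mul_assoc]
        congr 1
        rw [← zpow_natCast q (k + 1), ← zpow_natCast q (k - 1), ← zpow_add₀ hq]
        congr 1
        omega
      rw [site1, site2] at hsucc
      have hd : KRmon q (aa s) (rr s) (f s - 1) - KRmon q (aa s) (rr s) (f s)
          = Finsupp.single (a * q ^ (k - 1)) 1 + Finsupp.single (a * q ^ (k + 1)) 1 := by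
        rw [hsucc]; abel
      have key : ∑ t, (KRmon q (aa t) (rr t) (if t = s then f s - 1 else f t)
            - KRmon q (aa t) (rr t) (f t))
          = KRmon q (aa s) (rr s) (f s - 1) - KRmon q (aa s) (rr s) (f s) := by
        rw [Finset.sum_eq_single s]
        · rw [if_pos rfl]
        · intro t _ hts; rw [if_neg hts, sub_self]
        · intro h'; exact absurd (Finset.mem_univ s) h'
      have hsum2 : ∑ t, KRmon q (aa t) (rr t) (if t = s then f s - 1 else f t)
          = (∑ t, KRmon q (aa t) (rr t) (f t))
            + (Finsupp.single (a * q ^ (k - 1)) 1 + Finsupp.single (a * q ^ (k + 1)) 1) := by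
        rw [← hd, ← key, Finset.sum_sub_distrib]
        abel
      rw [hsum2, ← hm]
      abel
  · -- Case (i): at least n factors have their top remaining Y exactly at a
    push_neg at hcase
    have hq2 : q ^ (2 : ℤ) = q ^ (2 : ℕ) := by norm_cast
    have hqm2 : q ^ (2 : ℕ) * q ^ (-2 : ℤ) = 1 := by
      rw [← hq2, ← zpow_add₀ hq]; norm_num
    set G : Finset T := Finset.univ.filter
      (fun t => f t < rr t ∧ aa t * q ^ ((rr t : ℤ) - 1 - 2 * (f t : ℤ)) = a) with hGdef
    have imp1 : ∀ t, st16.NIn q (aa t) (a * q ^ 2) (rr t) (f t)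
        → st16.NIn q (aa t) a (rr t) (f t) := by
      rintro t ⟨l, hl, he⟩
      rw [Finset.mem_Icc] at hl
      by_cases hlf : l = f t
      · exfalso
        refine hcase t (by omega) 1 one_pos ?_
        rw [show (rr t : ℤ) + 3 - 2 * (f t : ℤ) = (rr t : ℤ) + 3 - 2 * (l : ℤ) from by omega, he]
      · refine ⟨l + 1, Finset.mem_Icc.mpr (by omega), ?_⟩
        have hexp : (rr t : ℤ) + 3 - 2 * ((l + 1 : ℕ) : ℤ)
            = ((rr t : ℤ) + 3 - 2 * (l : ℤ)) + (-2) := by push_cast; ring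
        rw [hexp, zpow_add₀ hq, ← mul_assoc, he, mul_assoc, hqm2, mul_one]
    have imp2 : ∀ t, st16.PIn q (aa t) a (rr t) (f t) → t ∉ G
        → st16.PIn q (aa t) (a * q ^ 2) (rr t) (f t) := by
      rintro t ⟨l, hl, he⟩ hg
      rw [Finset.mem_Icc] at hl
      have hft : f t < rr t := by omega
      have htop : aa t * q ^ ((rr t : ℤ) - 1 - 2 * (f t : ℤ)) ≠ a := by
        intro hcontra
        exact hg (Finset.mem_filter.mpr ⟨Finset.mem_univ t, hft, hcontra⟩)
      by_cases hl' : l = rr t - f t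
      · exfalso
        apply htop
        rw [show (rr t : ℤ) - 1 - 2 * (f t : ℤ) = -(rr t : ℤ) - 1 + 2 * (l : ℤ) from by
          subst hl'; have := hf t; omega]
        exact he
      · refine ⟨l + 1, Finset.mem_Icc.mpr (by omega), ?_⟩
        have hexp : -(rr t : ℤ) - 1 + 2 * ((l + 1 : ℕ) : ℤ)
            = (-(rr t : ℤ) - 1 + 2 * (l : ℤ)) + 2 := by push_cast; ring
        rw [hexp, zpow_add₀ hq, ← mul_assoc, he, hq2]
    have hEval : ∀ c : ℂ, m c = ∑ t, ((if st16.PIn q (aa t) c (rr t) (f t) then (1:ℤ) else 0)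
        - (if st16.NIn q (aa t) c (rr t) (f t) then 1 else 0)) := by
      intro c
      rw [hm, Finsupp.finset_sum_apply]
      exact Finset.sum_congr rfl fun t _ => st16.KRmon_apply q hq hnru (aa t) (haa t) (rr t) (f t) c
    have hpt : ∀ t, ((if st16.PIn q (aa t) a (rr t) (f t) then (1:ℤ) else 0)
          - (if st16.NIn q (aa t) a (rr t) (f t) then 1 else 0))
        - ((if st16.PIn q (aa t) (a * q ^ 2) (rr t) (f t) then (1:ℤ) else 0)
          - (if st16.NIn q (aa t) (a * q ^ 2) (rr t) (f t) then 1 else 0))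
        ≤ (if t ∈ G then (1:ℤ) else 0) := by
      intro t
      have b1 : (if st16.NIn q (aa t) (a * q ^ 2) (rr t) (f t) then (1:ℤ) else 0)
          ≤ (if st16.NIn q (aa t) a (rr t) (f t) then 1 else 0) := by
        by_cases h : st16.NIn q (aa t) (a * q ^ 2) (rr t) (f t)
        · rw [if_pos h, if_pos (imp1 t h)]
        · rw [if_neg h]; split_ifs <;> norm_num
      have b2 : (if st16.PIn q (aa t) a (rr t) (f t) then (1:ℤ) else 0)
          ≤ (if t ∈ G then (1:ℤ) else 0)
            + (if st16.PIn q (aa t) (a * q ^ 2) (rr t) (f t) then 1 else 0) := by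
        by_cases hpa : st16.PIn q (aa t) a (rr t) (f t)
        · by_cases hg : t ∈ G
          · rw [if_pos hpa, if_pos hg]; split_ifs <;> norm_num
          · rw [if_pos hpa, if_neg hg, if_pos (imp2 t hpa hg)]; norm_num
        · rw [if_neg hpa]; split_ifs <;> norm_num
      linarith [b1, b2]
    have hGsum : ∑ t, (if t ∈ G then (1:ℤ) else 0) = (G.card : ℤ) := by
      rw [Finset.sum_ite_mem, Finset.univ_inter, Finset.sum_const]
      simp
    have hsum : m a - m (a * q ^ 2) ≤ (G.card : ℤ) := by
      rw [hEval a, hEval (a * q ^ 2), ← Finset.sum_sub_distrib]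
      rw [← hGsum]
      exact Finset.sum_le_sum fun t _ => hpt t
    have hGcard : n ≤ G.card := by
      rw [hnot] at hsum
      have : (n : ℤ) ≤ (G.card : ℤ) := by linarith
      exact_mod_cast this
    refine Or.inl fun p hp1 hpn => ?_
    obtain ⟨S, hSG, hScard⟩ := Finset.exists_subset_card_eq (le_trans hpn hGcard)
    refine ⟨fun t => f t + (if t ∈ S then 1 else 0), ?_, ?_⟩
    · intro t
      dsimp only
      by_cases h : t ∈ S
      · have := (Finset.mem_filter.mp (hSG h)).2.1
        rw [if_pos h]; omega
      · rw [if_neg h]; have := hf t; omega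
    · have key : ∀ t ∈ S, KRmon q (aa t) (rr t) (f t + 1)
          = KRmon q (aa t) (rr t) (f t)
            - (Finsupp.single (a * q ^ 2) 1 + Finsupp.single a 1) := by
        intro t ht
        obtain ⟨-, hft, htop⟩ := Finset.mem_filter.mp (hSG ht)
        have hsucc := st16.KRmon_succ q (aa t) (rr t) (f t) hft
        have htop2 : aa t * q ^ ((rr t : ℤ) + 1 - 2 * (f t : ℤ)) = a * q ^ 2 := by
          rw [show (rr t : ℤ) + 1 - 2 * (f t : ℤ)
                = ((rr t : ℤ) - 1 - 2 * (f t : ℤ)) + 2 from by ring,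
            zpow_add₀ hq, ← mul_assoc, htop, hq2]
        rw [htop, htop2] at hsucc
        rw [hsucc]; abel
      have hsum2 : ∑ t, KRmon q (aa t) (rr t) (f t + (if t ∈ S then 1 else 0))
          = (∑ t, KRmon q (aa t) (rr t) (f t))
            - ∑ t, (if t ∈ S then (Finsupp.single (a * q ^ 2) 1 + Finsupp.single a 1) else 0) := by
        rw [← Finset.sum_sub_distrib]
        refine Finset.sum_congr rfl fun t _ => ?_
        by_cases h : t ∈ S
        · rw [if_pos h, if_pos h]; exact key t h
        · rw [if_neg h, if_neg h]; simp
      rw [hsum2, ← hm]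
      congr 1
      rw [Finset.sum_ite_mem, Finset.univ_inter, Finset.sum_const, hScard]
      exact natCast_zsmul _ p
end
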